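/- Let α ≥ ω₁ be a regular cardinal and 2 ≤ n < ω. If there exists a prime map f : C⁻(α,n) → C⁻(α,n+1), then there exists a prime map f' : C⁻(α,n) → C⁻(α,n+1) such that, identifying α^n with α × α^{n-1} and α^{n+1} with α × α^n, for every ξ < α the image f'({ξ} × α^{n-1}) is disjoint from ⋃_{η<ξ} {η} × α^n. -/

import Mathlib

universe u v

/-- `CIdx K m` represents the set `αⁿ` for `n = m+1`, where `K` plays the role of `α`. -/
def CIdx (K : Type u) : ℕ → Type u
  | 0 => K
  | m + 1 => K × CIdx K m

/-- Given a subset `U` of `(α × αⁿ) ∪ {∞}` and `ξ`, the set `{x ∈ αⁿ : (ξ,x) ∈ U} ∪ {∞}`. -/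
def cslice {K J : Type u} (U : Set (Option (K × J))) (ξ : K) : Set (Option J) :=
  insert none (Option.some '' {x : J | Option.some (ξ, x) ∈ U})

/-- The openness predicate of the space `C⁻(α, m+1)`. -/
def CIsOpen (K : Type u) : (m : ℕ) → Set (Option (CIdx K m)) → Prop
  | 0, U => none ∈ U → Cardinal.mk ((Option.some ⁻¹' U)ᶜ : Set K) < Cardinal.mk K
  | m + 1, U => none ∈ U →
      Cardinal.mk (({ξ : K | CIsOpen K m (cslice U ξ)}ᶜ : Set K)) < Cardinal.mk K

theorem cslice_mono {K J : Type u} {U V : Set (Option (K × J))} (h : U ⊆ V) (ξ : K) :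
    cslice U ξ ⊆ cslice V ξ := by
  intro z hz
  rcases hz with hz | hz
  · exact Or.inl hz
  · rcases hz with ⟨x, hx, rfl⟩
    exact Or.inr ⟨x, h hx, rfl⟩

theorem none_mem_cslice {K J : Type u} (U : Set (Option (K × J))) (ξ : K) :
    none ∈ cslice U ξ := Set.mem_insert _ _

theorem cisOpen_of_none_not_mem (K : Type u) (m : ℕ) (U : Set (Option (CIdx K m)))
    (h : none ∉ U) : CIsOpen K m U := by
  cases m with
  | zero => exact fun hU => absurd hU h
  | succ m => exact fun hU => absurd hU h

theorem cisOpen_mono (K : Type u) (m : ℕ) :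
    ∀ U V : Set (Option (CIdx K m)), CIsOpen K m U → U ⊆ V → (none ∈ V → none ∈ U) →
      CIsOpen K m V := by
  induction m with
  | zero =>
    intro U V hU hUV hnone hV
    refine lt_of_le_of_lt (Cardinal.mk_le_mk_of_subset ?_) (hU (hnone hV))
    intro k hk hU'
    exact hk (hUV hU')
  | succ m ih =>
    intro U V hU hUV hnone hV
    refine lt_of_le_of_lt (Cardinal.mk_le_mk_of_subset ?_) (hU (hnone hV))
    intro ξ hξ hopen
    exact hξ (ih _ _ hopen (cslice_mono hUV ξ) (fun _ => none_mem_cslice U ξ))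

theorem cslice_univ {K J : Type u} (ξ : K) :
    cslice (Set.univ : Set (Option (K × J))) ξ = Set.univ := by
  ext z
  cases z with
  | none => simp [cslice]
  | some j => simp [cslice]

theorem cisOpen_univ (K : Type u) [Nonempty K] (m : ℕ) : CIsOpen K m Set.univ := by
  cases m with
  | zero =>
    intro _
    change Cardinal.mk ((Option.some ⁻¹' (Set.univ : Set (Option K)))ᶜ : Set K) < Cardinal.mk K
    simp only [Set.preimage_univ, Set.compl_univ, Cardinal.mk_emptyCollection]
    exact Cardinal.mk_ne_zero K |>.bot_lt
  | succ m =>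
    intro _
    have h : ({ξ : K | CIsOpen K m (cslice (Set.univ : Set (Option (CIdx K (m+1)))) ξ)}ᶜ : Set K)
        = ∅ := by
      ext ξ
      simp only [Set.mem_compl_iff, Set.mem_setOf_eq, Set.mem_empty_iff_false, iff_false, not_not]
      change CIsOpen K m (cslice (Set.univ : Set (Option (K × CIdx K m))) ξ)
      rw [cslice_univ]
      exact cisOpen_univ K m
    rw [h, Cardinal.mk_emptyCollection]
    exact Cardinal.mk_ne_zero K |>.bot_lt

theorem some_mem_cslice_iff {K J : Type u} (U : Set (Option (K × J))) (ξ : K) (x : J) :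
    some x ∈ cslice U ξ ↔ some (ξ, x) ∈ U := by
  simp [cslice]

theorem cslice_inter {K J : Type u} (U V : Set (Option (K × J))) (ξ : K) :
    cslice (U ∩ V) ξ = cslice U ξ ∩ cslice V ξ := by
  ext z
  cases z with
  | none => simp [none_mem_cslice]
  | some x => simp [some_mem_cslice_iff]

theorem cisOpen_inter (K : Type u) [Infinite K] (m : ℕ) :
    ∀ U V : Set (Option (CIdx K m)), CIsOpen K m U → CIsOpen K m V →
      CIsOpen K m (U ∩ V) := by
  induction m with
  | zero =>
    intro U V hU hV h
    have hsub : ((Option.some ⁻¹' (U ∩ V))ᶜ : Set K) ⊆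
        (Option.some ⁻¹' U)ᶜ ∪ (Option.some ⁻¹' V)ᶜ := by
      intro k hk
      by_contra hc
      exact hk ⟨Classical.byContradiction fun h1 => hc (Or.inl h1),
        Classical.byContradiction fun h2 => hc (Or.inr h2)⟩
    refine lt_of_le_of_lt (Cardinal.mk_le_mk_of_subset hsub) ?_
    refine lt_of_le_of_lt (Cardinal.mk_union_le _ _) ?_
    exact Cardinal.add_lt_of_lt (Cardinal.aleph0_le_mk K) (hU h.1) (hV h.2)
  | succ m ih =>
    intro U V hU hV h
    have hsub : ({ξ : K | CIsOpen K m (cslice (U ∩ V) ξ)}ᶜ : Set K) ⊆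
        {ξ : K | CIsOpen K m (cslice U ξ)}ᶜ ∪ {ξ : K | CIsOpen K m (cslice V ξ)}ᶜ := by
      intro ξ hξ
      by_contra hc
      have e : cslice (U ∩ V) ξ = cslice U ξ ∩ cslice V ξ := cslice_inter U V ξ
      exact hξ (Eq.mpr (congrArg (CIsOpen K m) e)
        (ih _ _ (Classical.byContradiction fun h1 => hc (Or.inl h1))
          (Classical.byContradiction fun h2 => hc (Or.inr h2))))
    refine lt_of_le_of_lt (Cardinal.mk_le_mk_of_subset hsub) ?_
    refine lt_of_le_of_lt (Cardinal.mk_union_le _ _) ?_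
    exact Cardinal.add_lt_of_lt (Cardinal.aleph0_le_mk K) (hU h.1) (hV h.2)

theorem cisOpen_sUnion (K : Type u) (m : ℕ) (S : Set (Set (Option (CIdx K m))))
    (hS : ∀ U ∈ S, CIsOpen K m U) : CIsOpen K m (⋃₀ S) := by
  by_cases h : none ∈ ⋃₀ S
  · obtain ⟨U, hUS, hU⟩ := h
    exact cisOpen_mono K m U _ (hS U hUS) (Set.subset_sUnion_of_mem hUS) (fun _ => hU)
  · exact cisOpen_of_none_not_mem _ _ _ h

/-- The space `C⁻(α, m+1)` from the paper (so `m = 0` gives `C(α)` itself);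
`K` plays the role of the set of ordinals `< α` and `none` plays the role of `∞`. -/
def CTop (K : Type u) [Infinite K] (m : ℕ) : TopologicalSpace (Option (CIdx K m)) where
  IsOpen := CIsOpen K m
  isOpen_univ := cisOpen_univ K m
  isOpen_inter := cisOpen_inter K m
  isOpen_sUnion := cisOpen_sUnion K m

instance instCTop (K : Type u) [Infinite K] (m : ℕ) : TopologicalSpace (Option (CIdx K m)) :=
  CTop K m

theorem nonempty_cIdx (K : Type u) [Nonempty K] : ∀ m : ℕ, Nonempty (CIdx K m)
  | 0 => ‹Nonempty K›
  | m + 1 => ⟨(Classical.arbitrary K, (nonempty_cIdx K m).some)⟩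

theorem exists_inj_choice {K : Type u} [LinearOrder K] [IsWellOrder K (· < ·)]
    (hK : Cardinal.aleph0 ≤ Cardinal.mk K)
    (hseg : ∀ ξ : K, Cardinal.mk {η : K // η < ξ} < Cardinal.mk K)
    (G : K → Set K) (hG : ∀ ξ, Cardinal.mk ((G ξ)ᶜ : Set K) < Cardinal.mk K) :
    ∃ e : K → K, Function.Injective e ∧ ∀ ξ, e ξ ∈ G ξ := by
  have wf : WellFounded ((· < ·) : K → K → Prop) := IsWellFounded.wf
  have key : ∀ (ξ : K) (ih : ∀ η, η < ξ → K),
      (G ξ \ Set.range (fun p : {η : K // η < ξ} => ih p.1 p.2)).Nonempty := by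
    intro ξ ih
    rw [Set.diff_nonempty]
    intro hsub
    have huniv : (Set.univ : Set K) ⊆
        (G ξ)ᶜ ∪ Set.range (fun p : {η : K // η < ξ} => ih p.1 p.2) := by
      intro ζ _
      by_cases h : ζ ∈ G ξ
      · exact Or.inr (hsub h)
      · exact Or.inl h
    have hlt : Cardinal.mk K < Cardinal.mk K := by
      calc Cardinal.mk K = Cardinal.mk (Set.univ : Set K) := Cardinal.mk_univ.symm
        _ ≤ Cardinal.mk (((G ξ)ᶜ ∪ Set.range (fun p : {η : K // η < ξ} => ih p.1 p.2) : Set K)) :=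
            Cardinal.mk_le_mk_of_subset huniv
        _ ≤ Cardinal.mk ((G ξ)ᶜ : Set K) +
            Cardinal.mk (Set.range (fun p : {η : K // η < ξ} => ih p.1 p.2)) :=
            Cardinal.mk_union_le _ _
        _ < Cardinal.mk K :=
            Cardinal.add_lt_of_lt hK (hG ξ)
              (lt_of_le_of_lt Cardinal.mk_range_le (hseg ξ))
    exact absurd hlt (lt_irrefl _)
  let F : ∀ ξ : K, (∀ η, η < ξ → K) → K := fun ξ ih => (key ξ ih).some
  let e : K → K := wf.fix F
  have hefix : ∀ ξ, e ξ = F ξ (fun η _ => e η) := fun ξ => wf.fix_eq F ξ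
  have hspec : ∀ ξ, e ξ ∈ G ξ \ Set.range (fun p : {η : K // η < ξ} => e p.1) := by
    intro ξ
    rw [hefix ξ]
    exact (key ξ (fun η _ => e η)).some_mem
  refine ⟨e, ?_, fun ξ => (hspec ξ).1⟩
  intro a b hab
  by_contra hne
  rcases lt_or_gt_of_ne hne with h | h
  · exact (hspec b).2 ⟨⟨a, h⟩, hab⟩
  · exact (hspec a).2 ⟨⟨b, h⟩, hab.symm⟩

/-- let `α ≥ ω₁` be regular (here `K` is the set of ordinals `< α`, i.e. a
well-ordered set of order type the initial ordinal of `α = #K`) and `2 ≤ n < ω`.  If there is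
a prime map `f : C⁻(α,n) → C⁻(α,n+1)`, then there is a prime map
`f' : C⁻(α,n) → C⁻(α,n+1)` such that for every `ξ < α` the image `f' ({ξ} × α^{n-1})` is
disjoint from `⋃_{η<ξ} {η} × α^n`.  Here `CTop K m` is `C⁻(α, m+1)` and `none` is `∞`; the
paper's `n ≥ 2` corresponds to `n = r + 2`, and `CIdx K (r+1) = K × CIdx K r` realizes the
identification `α^n = α × α^{n-1}` (similarly for `α^{n+1}`). -/
theorem stmt13 (K : Type u) [Infinite K] [LinearOrder K] [IsWellOrder K (· < ·)]
    (htype : Ordinal.type ((· < ·) : K → K → Prop) = (Cardinal.mk K).ord)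
    (hreg : (Cardinal.mk K).IsRegular) (hω1 : Cardinal.aleph 1 ≤ Cardinal.mk K) (r : ℕ)
    (f : Option (CIdx K (r + 1)) → Option (CIdx K (r + 2)))
    (hfc : Continuous f) (hfp : f ⁻¹' {none} = {none}) :
    ∃ f' : Option (CIdx K (r + 1)) → Option (CIdx K (r + 2)),
      Continuous f' ∧ f' ⁻¹' {none} = {none} ∧
      ∀ ξ : K, Disjoint
        (f' '' {z : Option (CIdx K (r + 1)) | ∃ x : CIdx K r, z = some (ξ, x)})
        {z : Option (CIdx K (r + 2)) | ∃ (η : K) (v : CIdx K (r + 1)), η < ξ ∧ z = some (η, v)}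
        := by
  
  classical
  have hseg : ∀ ξ : K, Cardinal.mk {η : K // η < ξ} < Cardinal.mk K := by
    intro ξ
    rw [← Ordinal.card_typein (r := (· < ·))]
    exact Cardinal.card_typein_lt ξ htype.symm
  -- basic facts about f
  have hfnone : f none = none := by
    have h0 : (none : Option (CIdx K (r + 1))) ∈ f ⁻¹' {none} := by
      rw [hfp]; exact rfl
    exact h0
  have hfsome : ∀ w : CIdx K (r + 1), f (some w) ≠ none := by
    intro w h
    have : some w ∈ f ⁻¹' ({none} : Set (Option (CIdx K (r + 2)))) := h
    rw [hfp] at this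
    exact Option.some_ne_none w this
  -- the open set of columns ≥ ξ
  set Uset : K → Set (Option (CIdx K (r + 2))) := fun ξ =>
    insert none {z | ∃ (η : K) (v : CIdx K (r + 1)), ξ ≤ η ∧ z = some (η, v)} with hUsetdef
  have hUopen : ∀ ξ : K, CIsOpen K (r + 2) (Uset ξ) := by
    intro ξ _
    have hsub : ({η : K | CIsOpen K (r + 1) (cslice (Uset ξ) η)}ᶜ : Set K) ⊆ {η : K | η < ξ} := by
      intro η hη
      by_contra hlt
      have hle : ξ ≤ η := not_lt.mp (by simpa using hlt)
      apply hη
      have huniv : cslice (Uset ξ) η = Set.univ := by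
        apply Set.eq_univ_of_forall
        intro z
        cases z with
        | none => exact none_mem_cslice _ _
        | some x =>
          exact (some_mem_cslice_iff _ _ _).mpr
            (Set.mem_insert_iff.mpr (Or.inr ⟨η, x, hle, rfl⟩))
      show CIsOpen K (r + 1) (cslice (Uset ξ) η)
      rw [huniv]
      exact cisOpen_univ K (r + 1)
    exact lt_of_le_of_lt (Cardinal.mk_le_mk_of_subset hsub) (hseg ξ)
  -- choose injective e with e ξ in the good set for Uset ξ
  obtain ⟨e, heinj, hespec⟩ := exists_inj_choice (Cardinal.aleph0_le_mk K) hseg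
    (fun ξ => {ζ : K | CIsOpen K r (cslice (f ⁻¹' Uset ξ) ζ)})
    (by
      intro ξ
      have hopen : CIsOpen K (r + 1) (f ⁻¹' Uset ξ) :=
        hfc.isOpen_preimage (Uset ξ) (hUopen ξ)
      have hmem : none ∈ f ⁻¹' Uset ξ := by
        show f none ∈ Uset ξ
        rw [hfnone]
        exact Set.mem_insert _ _
      exact hopen hmem)
  have v0 : CIdx K (r + 1) := (nonempty_cIdx K (r + 1)).some
  refine ⟨fun z => Option.elim z none (fun p =>
      Option.elim (f (some (e p.1, p.2))) (some (p.1, v0))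
        (fun q => if p.1 ≤ q.1 then some q else some (p.1, v0))), ?_, ?_, ?_⟩
  · -- continuity
    rw [continuous_def]
    intro U hU
    show CIsOpen K (r + 1) _
    by_cases hnU : (none : Option (CIdx K (r + 2))) ∈ U
    · intro _
      have hfU : CIsOpen K (r + 1) (f ⁻¹' U) := hfc.isOpen_preimage U hU
      have hnfU : none ∈ f ⁻¹' U := by
        show f none ∈ U
        rw [hfnone]; exact hnU
      have hbig := hfU hnfU
      have hsub : ({ξ : K | CIsOpen K r (cslice ((fun z => Option.elim z none (fun p =>
          Option.elim (f (some (e p.1, p.2))) (some (p.1, v0))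
            (fun q => if p.1 ≤ q.1 then some q else some (p.1, v0)))) ⁻¹' U) ξ)}ᶜ : Set K) ⊆
          e ⁻¹' ({ζ : K | CIsOpen K r (cslice (f ⁻¹' U) ζ)}ᶜ) := by
        intro ξ hξ
        simp only [Set.mem_compl_iff, Set.mem_setOf_eq, Set.mem_preimage] at hξ ⊢
        intro heD
        apply hξ
        have h2 : CIsOpen K r (cslice (f ⁻¹' Uset ξ) (e ξ)) := hespec ξ
        have h3 := cisOpen_inter K r _ _ heD h2
        refine cisOpen_mono K r _ _ h3 ?_
          (fun _ => ⟨none_mem_cslice _ _, none_mem_cslice _ _⟩)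
        intro z hz
        cases z with
        | none => exact none_mem_cslice _ _
        | some x =>
          obtain ⟨hz1, hz2⟩ := hz
          rw [some_mem_cslice_iff] at hz1 hz2
          change f (some (e ξ, x)) ∈ U at hz1
          change f (some (e ξ, x)) ∈ Uset ξ at hz2
          refine (some_mem_cslice_iff _ _ _).mpr ?_
          show (Option.elim (f (some (e ξ, x))) (some (ξ, v0))
            (fun q => if ξ ≤ q.1 then some q else some (ξ, v0))) ∈ U
          cases hq : f (some (e ξ, x)) with
          | none => exact absurd hq (hfsome _)
          | some q =>
            rw [hq] at hz1 hz2
            have hle : ξ ≤ q.1 := by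
              rcases Set.mem_insert_iff.mp hz2 with h' | ⟨η, v, hle, heq⟩
              · exact absurd h' (Option.some_ne_none q)
              · obtain rfl : q = (η, v) := Option.some.inj heq
                exact hle
            simp only [Option.elim]
            rw [if_pos hle]
            exact hz1
      refine lt_of_le_of_lt (Cardinal.mk_le_mk_of_subset hsub) ?_
      exact lt_of_le_of_lt (Cardinal.mk_preimage_of_injective e _ heinj) hbig
    · apply cisOpen_of_none_not_mem
      intro h
      exact hnU h
  · -- prime
    ext z
    cases z with
    | none =>
      simp
    | some p =>
      simp only [Set.mem_preimage, Set.mem_singleton_iff]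
      constructor
      · intro h
        exfalso
        obtain ⟨ξ, x⟩ := p
        replace h : (Option.elim (f (some (e ξ, x))) (some (ξ, v0))
            (fun q => if ξ ≤ q.1 then some q else some (ξ, v0))) = none := h
        cases hq : f (some (e ξ, x)) with
        | none => exact hfsome _ hq
        | some q =>
          rw [hq] at h
          simp only [Option.elim] at h
          rcases le_or_gt ξ q.1 with hle | hlt
          · rw [if_pos hle] at h; exact Option.some_ne_none _ h
          · rw [if_neg (not_le.mpr hlt)] at h; exact Option.some_ne_none _ h
      · intro h
        exact absurd h (Option.some_ne_none p)
  · -- disjointness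
    intro ξ
    rw [Set.disjoint_left]
    rintro z ⟨w, ⟨x, rfl⟩, rfl⟩ hz2
    obtain ⟨η, v, hlt, heq⟩ := hz2
    replace heq : (Option.elim (f (some (e ξ, x))) (some (ξ, v0))
        (fun q => if ξ ≤ q.1 then some q else some (ξ, v0))) = some (η, v) := heq
    cases hq : f (some (e ξ, x)) with
    | none =>
      rw [hq] at heq
      simp only [Option.elim] at heq
      have h' : ξ = η := congrArg Prod.fst (Option.some.inj heq)
      exact absurd hlt (by rw [h']; exact lt_irrefl η)
    | some q =>
      rw [hq] at heq
      simp only [Option.elim] at heq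
      rcases le_or_gt ξ q.1 with hle | hlt'
      · rw [if_pos hle] at heq
        obtain rfl : q = (η, v) := Option.some.inj heq
        exact absurd (lt_of_le_of_lt hle hlt) (lt_irrefl _)
      · rw [if_neg (not_le.mpr hlt')] at heq
        have : ξ = η := congrArg Prod.fst (Option.some.inj heq)
        exact absurd (this ▸ hlt) (lt_irrefl _)
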